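/- Assume n + n' is odd and τ ≥ 0. Let Λ ∈ S_{n,δ} with Υ(Λ) = (μ;ν), μ = (μ_1 ≥ … ≥ μ_{m_1}), ν = (ν_1 ≥ … ≥ ν_{m_2}), and ν_1 ≥ 1, and for 0 ≤ k ≤ ν_1 represent θ_k(Λ) by the unitary-type symbol whose first row has m_2 entries and whose second row has m_1 + 1 entries. Then for each 0 ≤ k < ν_1 there are an entry α_k of the first row and an entry β_k of the second row of θ_k(Λ) such that, as multisets, the first row of θ_{k+1}(Λ) is obtained from that of θ_k(Λ) by replacing one occurrence of α_k by α_k − 2 and the second row is obtained by replacing one occurrence of β_k by β_k + 2. Moreover, all α_k have the same parity and α_0 > α_1 > … > α_{ν_1−1}; all β_k have the same parity and β_0 < β_1 < … < β_{ν_1−1}; and α_k and β_{k'} have opposite parities for all k, k'. -/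

import Mathlib

namespace PanUnitary

/-- `part μ i` : the `i`-th largest element (0-indexed) of the multiset `μ`, `0` beyond.
Viewing a multiset of naturals as a partition (identified up to trailing zeros),
this is the `(i+1)`-st part. -/
def part (μ : Multiset ℕ) (i : ℕ) : ℕ := ((μ.sort (· ≤ ·)).reverse).getD i 0

/-- Remove the zero parts: the canonical (zero-free) representative of a partition. -/
def strip (μ : Multiset ℕ) : Multiset ℕ := μ.filter (fun x => 0 < x)

/-- `transpose μ j` is the `(j+1)`-st part of the transposed (conjugate) partition. -/
def transpose (μ : Multiset ℕ) (j : ℕ) : ℕ := (μ.filter (fun x => j < x)).card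

/-- `Preceq f g` : the partition whose parts are given by `f` is `⪯` the one given by `g`,
i.e. `g i - 1 ≤ f i ≤ g i` for all `i`. -/
def Preceq (f g : ℕ → ℕ) : Prop := ∀ i, g i ≤ f i + 1 ∧ f i ≤ g i

/-- An integer `δ` is admissible if it is even and nonnegative, or odd and negative. -/
def IsAdmissible (δ : ℤ) : Prop := (Even δ ∧ 0 ≤ δ) ∨ (Odd δ ∧ δ < 0)

/-- `ε = 1` if `δ` is even, `ε = 0` if `δ` is odd. -/
def eps (δ : ℤ) : ℕ := if Even δ then 1 else 0

/-- `d (d + 1) / 2` where `d = |δ|`. -/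
def halfTri (δ : ℤ) : ℕ := δ.natAbs * (δ.natAbs + 1) / 2

/-- A symbol: a pair of rows of natural numbers (the strict-decrease condition is
part of the predicate `Symbol.IsUnitary`). -/
structure Symbol where
  A : List ℕ
  B : List ℕ

def Symbol.defect (Λ : Symbol) : ℤ := (Λ.A.length : ℤ) - (Λ.B.length : ℤ)

/-- The row `(a_1, …, a_m)` gives the partition with parts `(a_i - e)/2 - (m - i)`. -/
def upsRow (L : List ℕ) (e : ℕ) : Multiset ℕ :=
  ((L.mapIdx fun i a => (a - e) / 2 - (L.length - 1 - i) : List ℕ) : Multiset ℕ)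

/-- The bipartition `Υ(Λ)` (canonical zero-free representatives). -/
def Symbol.Upsilon (Λ : Symbol) : Multiset ℕ × Multiset ℕ :=
  (strip (upsRow Λ.A (eps Λ.defect)), strip (upsRow Λ.B (1 - eps Λ.defect)))

/-- `Λ` is a unitary-type symbol of (admissible) defect `δ`. -/
def Symbol.IsUnitary (Λ : Symbol) (δ : ℤ) : Prop :=
  Λ.A.Pairwise (· > ·) ∧ Λ.B.Pairwise (· > ·) ∧ Λ.defect = δ ∧
    (∀ a ∈ Λ.A, a % 2 = eps δ) ∧ (∀ b ∈ Λ.B, b % 2 = 1 - eps δ)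

/-- The rank `2(|μ| + |ν|) + d(d+1)/2` of a unitary-type symbol. -/
def Symbol.rank (Λ : Symbol) : ℕ :=
  2 * (Λ.Upsilon.1.sum + Λ.Upsilon.2.sum) + halfTri Λ.defect

/-- Equivalence of symbols: same defect and same `Υ`. -/
def Symbol.Equiv (Λ Λ' : Symbol) : Prop :=
  Λ.defect = Λ'.defect ∧ Λ.Upsilon = Λ'.Upsilon

/-- Membership in `S_{n,δ}`: a unitary-type symbol of admissible defect `δ` and rank `n`. -/
def InS (n : ℕ) (δ : ℤ) (Λ : Symbol) : Prop :=
  IsAdmissible δ ∧ Λ.IsUnitary δ ∧ Λ.rank = n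

/-- `Σ min(x,y)` over all unordered pairs of (positions of) entries of the list. -/
def pairMinSum : List ℕ → ℕ
  | [] => 0
  | x :: xs => (xs.map (fun y => min x y)).sum + pairMinSum xs

/-- All entries of a symbol (both rows). -/
def Symbol.entries (Λ : Symbol) : List ℕ := Λ.A ++ Λ.B

/-- `ord(Λ) = Σ min(x,y) − Σ_{i=1}^{⌊N/2⌋} (N − 2i)²`. -/
def Symbol.ord (Λ : Symbol) : ℤ :=
  (pairMinSum Λ.entries : ℤ) -
    ∑ i ∈ Finset.Icc 1 (Λ.entries.length / 2),
      ((Λ.entries.length : ℤ) - 2 * (i : ℤ)) ^ 2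

/-- The shift of a unitary-type symbol. -/
def Symbol.shift (Λ : Symbol) : Symbol :=
  ⟨Λ.A.map (fun a => a + 2) ++ [eps Λ.defect],
   Λ.B.map (fun b => b + 2) ++ [1 - eps Λ.defect]⟩

/-- The defect `δ'` for the second member of the dual pair. -/
def deltaPrime (n n' : ℕ) (δ : ℤ) : ℤ :=
  if Even (n + n') then (if δ = 0 then 0 else -δ + 1) else -δ - 1

/-- `τ = ((n' − d'(d'+1)/2) − (n − d(d+1)/2)) / 2`. -/
def tau (n n' : ℕ) (δ : ℤ) : ℚ :=
  (((n' : ℚ) - (halfTri (deltaPrime n n' δ) : ℚ)) - ((n : ℚ) - (halfTri δ : ℚ))) / 2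

/-- `τ` as a natural number (equal to `τ` whenever `τ` is a nonnegative integer). -/
def tauNat (n n' : ℕ) (δ : ℤ) : ℕ :=
  ((n' + halfTri δ) - (n + halfTri (deltaPrime n n' δ))) / 2

/-- The set of (canonical, zero-free) bipartitions `(μ;ν)` with
`2(|μ|+|ν|) + d(d+1)/2 = n`; equivalently `|μ|+|ν| = (n − d(d+1)/2)/2`. -/
def BipSet (n : ℕ) (δ : ℤ) : Set (Multiset ℕ × Multiset ℕ) :=
  {p | (∀ x ∈ p.1, 0 < x) ∧ (∀ x ∈ p.2, 0 < x) ∧ 2 * (p.1.sum + p.2.sum) + halfTri δ = n}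

/-- The `⪯`-conditions (on transposes) defining the relation `Θ`, at the level of
bipartitions `p = Υ(Λ)`, `q = Υ(Λ')`. -/
def PrecCond (n n' : ℕ) (p q : Multiset ℕ × Multiset ℕ) : Prop :=
  if Even (n + n') then
    Preceq (transpose p.2) (transpose q.1) ∧ Preceq (transpose q.2) (transpose p.1)
  else
    Preceq (transpose p.1) (transpose q.2) ∧ Preceq (transpose q.1) (transpose p.2)

/-- `Θ` at the level of bipartitions (classes of symbols). -/
def ThetaB (n n' : ℕ) (δ : ℤ) (p q : Multiset ℕ × Multiset ℕ) : Prop :=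
  q ∈ BipSet n' (deltaPrime n n' δ) ∧ PrecCond n n' p q

/-- `Λ' ∈ Θ(Λ)` for symbols, where `Λ ∈ S_{n,δ}`. -/
def InTheta (n n' : ℕ) (δ : ℤ) (Λ Λ' : Symbol) : Prop :=
  InS n' (deltaPrime n n' δ) Λ' ∧ PrecCond n n' Λ.Upsilon Λ'.Upsilon

/-- `Λ' ∈ Θ(Λ)_k`. -/
def InThetaK (n n' : ℕ) (δ : ℤ) (k : ℕ) (Λ Λ' : Symbol) : Prop :=
  InTheta n n' δ Λ Λ' ∧
    (if Even (n + n') then (Λ'.Upsilon.2.sum : ℤ) = (Λ.Upsilon.1.sum : ℤ) - (k : ℤ)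
     else (Λ'.Upsilon.1.sum : ℤ) = (Λ.Upsilon.2.sum : ℤ) - (k : ℤ))

/-- Remove (one copy of) the largest part. -/
def mtail (μ : Multiset ℕ) : Multiset ℕ := μ.erase (part μ 0)

/-- `θ_k` at the level of bipartitions:
even case: `(μ;ν) ↦ (sort(ν, τ+k); sort(μ_2, …, μ_{m_1}, μ_1 − k))`;
odd case: `(μ;ν) ↦ (sort(ν_2, …, ν_{m_2}, ν_1 − k); sort(μ, τ+k))`. -/
def thetaBip (n n' : ℕ) (δ : ℤ) (k : ℕ) (p : Multiset ℕ × Multiset ℕ) :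
    Multiset ℕ × Multiset ℕ :=
  if Even (n + n') then
    (strip ((tauNat n n' δ + k) ::ₘ p.2), strip ((part p.1 0 - k) ::ₘ mtail p.1))
  else
    (strip ((part p.2 0 - k) ::ₘ mtail p.2), strip ((tauNat n n' δ + k) ::ₘ p.1))

/-- The unitary-type symbol of defect `δ` with `Υ = p`, whose first row has `m1`
entries and second row `m2` entries (valid whenever `m1, m2` are large enough). -/
def symbolOfBip (δ : ℤ) (p : Multiset ℕ × Multiset ℕ) (m1 m2 : ℕ) : Symbol :=
  ⟨List.ofFn (fun i : Fin m1 => 2 * (part p.1 (i : ℕ) + (m1 - 1 - (i : ℕ))) + eps δ),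
   List.ofFn (fun j : Fin m2 => 2 * (part p.2 (j : ℕ) + (m2 - 1 - (j : ℕ))) + (1 - eps δ))⟩

/-- A canonical representative symbol of defect `δ` with `Υ = p`. -/
def canonicalSymbol (δ : ℤ) (p : Multiset ℕ × Multiset ℕ) : Symbol :=
  symbolOfBip δ p (max p.1.card ((p.2.card : ℤ) + δ).toNat)
    (((max p.1.card ((p.2.card : ℤ) + δ).toNat : ℤ) - δ).toNat)

/-- A symbol representing the class `θ_k(Λ)`. -/
def thetaSymbol (n n' : ℕ) (δ : ℤ) (k : ℕ) (Λ : Symbol) : Symbol :=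
  canonicalSymbol (deltaPrime n n' δ) (thetaBip n n' δ k Λ.Upsilon)

/-- `K(Λ)`: `μ_1` in the even case, `ν_1` in the odd case. -/
def bigK (n n' : ℕ) (Λ : Symbol) : ℕ :=
  if Even (n + n') then part Λ.Upsilon.1 0 else part Λ.Upsilon.2 0

/-- `ord` at the level of bipartitions (well defined on classes). -/
def ordB (δ : ℤ) (p : Multiset ℕ × Multiset ℕ) : ℤ := (canonicalSymbol δ p).ord

/-- Strict lexicographic order on partitions. -/
def PartLexLt (μ ν : Multiset ℕ) : Prop :=
  ∃ i, (∀ j < i, part μ j = part ν j) ∧ part μ i < part ν i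

/-- The total order on `S_{n,δ}` (and on `S_{n',δ'}`), at the level of bipartitions;
it depends only on the parity of `n + n'`. -/
def BLt (n n' : ℕ) (p q : Multiset ℕ × Multiset ℕ) : Prop :=
  if Even (n + n') then
    p.1.sum < q.1.sum ∨ (p.1.sum = q.1.sum ∧ PartLexLt p.1 q.1) ∨
      (p.1 = q.1 ∧ PartLexLt p.2 q.2)
  else
    p.2.sum < q.2.sum ∨ (p.2.sum = q.2.sum ∧ PartLexLt p.2 q.2) ∨
      (p.2 = q.2 ∧ PartLexLt p.1 q.1)

/-- `q ∈ Θ♭(p)` relative to a given partial function `bar` (playing the role of `θ̄`). -/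
def InFlat (n n' : ℕ) (δ : ℤ)
    (bar : Multiset ℕ × Multiset ℕ → Option (Multiset ℕ × Multiset ℕ))
    (p q : Multiset ℕ × Multiset ℕ) : Prop :=
  ThetaB n n' δ p q ∧ ∀ r ∈ BipSet n δ, BLt n n' r p → bar r ≠ some q

/-- `bar` is the partial function `θ̄` defined by recursion along the total order:
on each `p ∈ S_{n,δ}`, if `Θ♭(p) ≠ ∅` then `bar p` is defined and is the smallest
element (w.r.t. the total order) of maximal `ord` in `Θ♭(p)`. -/
def IsThetaBar (n n' : ℕ) (δ : ℤ)
    (bar : Multiset ℕ × Multiset ℕ → Option (Multiset ℕ × Multiset ℕ)) : Prop :=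
  (∀ p, p ∉ BipSet n δ → bar p = none) ∧
  ∀ p ∈ BipSet n δ,
    ((∃ q, InFlat n n' δ bar p q) → ∃ q, bar p = some q) ∧
    ∀ q, bar p = some q →
      InFlat n n' δ bar p q ∧
      (∀ r, InFlat n n' δ bar p r →
        ordB (deltaPrime n n' δ) r ≤ ordB (deltaPrime n n' δ) q) ∧
      (∀ r, InFlat n n' δ bar p r →
        ordB (deltaPrime n n' δ) r = ordB (deltaPrime n n' δ) q → r ≠ q → BLt n n' q r)



/-! ### Auxiliary lemmas -/

lemma sorted_getD_lt_iff : ∀ (L : List ℕ), L.Pairwise (· ≥ ·) → ∀ i t,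
    (t < L.getD i 0 ↔ i < L.countP (fun x => decide (t < x))) := by
  intro L
  induction L with
  | nil => intro _ i t; simp
  | cons x xs ih =>
    intro hL i t
    have hx : ∀ y ∈ xs, y ≤ x := fun y hy => (List.pairwise_cons.1 hL).1 y hy
    have hxs : xs.Pairwise (· ≥ ·) := (List.pairwise_cons.1 hL).2
    rw [List.countP_cons]
    cases i with
    | zero =>
      simp only [List.getD_cons_zero]
      by_cases h : t < x
      · simp [h]
      · have h0 : xs.countP (fun x => decide (t < x)) = 0 :=
          List.countP_eq_zero.2 (fun y hy => by simp; have := hx y hy; omega)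
        simp [h, h0]
    | succ j =>
      simp only [List.getD_cons_succ]
      rw [ih hxs j t]
      by_cases h : t < x
      · simp [h]
      · have h0 : xs.countP (fun x => decide (t < x)) = 0 :=
          List.countP_eq_zero.2 (fun y hy => by simp; have := hx y hy; omega)
        simp [h, h0]

lemma part_lt_iff (μ : Multiset ℕ) (i t : ℕ) : t < part μ i ↔ i < transpose μ t := by
  have hs : ((μ.sort (· ≤ ·)).reverse).Pairwise (· ≥ ·) := by
    rw [List.pairwise_reverse]
    exact Multiset.pairwise_sort μ (· ≤ ·)
  have h := sorted_getD_lt_iff _ hs i t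
  rw [List.countP_reverse] at h
  rw [part, h, transpose, ← Multiset.countP_eq_card_filter]
  conv_rhs => rw [← Multiset.sort_eq μ (· ≤ ·), Multiset.coe_countP]

lemma eq_of_lt_iff {a b : ℕ} (h : ∀ t, t < a ↔ t < b) : a = b :=
  le_antisymm (le_of_not_gt fun hb => lt_irrefl b ((h b).1 hb))
    (le_of_not_gt fun hb => lt_irrefl a ((h a).2 hb))

lemma part_eq_of_transpose (μ μ' : Multiset ℕ) (i : ℕ)
    (h : ∀ t, i < transpose μ t ↔ i < transpose μ' t) : part μ i = part μ' i :=
  eq_of_lt_iff (fun t => by rw [part_lt_iff, part_lt_iff]; exact h t)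

lemma transpose_strip (μ : Multiset ℕ) (t : ℕ) : transpose (strip μ) t = transpose μ t := by
  unfold transpose strip
  rw [Multiset.filter_filter]
  congr 1
  apply Multiset.filter_congr
  intro x _
  constructor
  · exact fun h => h.1
  · exact fun h => ⟨h, by omega⟩

lemma part_strip (μ : Multiset ℕ) (i : ℕ) : part (strip μ) i = part μ i :=
  part_eq_of_transpose _ _ _ (fun t => by rw [transpose_strip])

lemma transpose_cons (a : ℕ) (s : Multiset ℕ) (t : ℕ) :
    transpose (a ::ₘ s) t = transpose s t + (if t < a then 1 else 0) := by
  unfold transpose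
  rw [Multiset.filter_cons]
  split <;> simp

lemma transpose_anti (s : Multiset ℕ) {t t' : ℕ} (h : t ≤ t') :
    transpose s t' ≤ transpose s t :=
  Multiset.card_le_card (Multiset.monotone_filter_right s (fun b hb => by omega))

lemma transpose_le_card (s : Multiset ℕ) (t : ℕ) : transpose s t ≤ Multiset.card s :=
  Multiset.card_le_card (Multiset.filter_le _ s)

lemma part_zero_mem (ν : Multiset ℕ) (h : 0 < part ν 0) : part ν 0 ∈ ν := by
  have h1 : 0 < transpose ν (part ν 0 - 1) := (part_lt_iff ν 0 (part ν 0 - 1)).1 (by omega)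
  obtain ⟨x, hx⟩ := Multiset.card_pos_iff_exists_mem.1 h1
  have hx1 := Multiset.mem_filter.1 hx
  have hle : x ≤ part ν 0 := by
    by_contra hgt
    have h2 : 0 < transpose ν (part ν 0) :=
      Multiset.card_pos_iff_exists_mem.2 ⟨x, Multiset.mem_filter.2 ⟨hx1.1, by omega⟩⟩
    have := (part_lt_iff ν 0 (part ν 0)).2 h2
    omega
  have hx2 : part ν 0 - 1 < x := hx1.2
  have : x = part ν 0 := by omega
  exact this ▸ hx1.1

lemma ofFn_update {m : ℕ} (f g : Fin m → ℕ) (i0 : Fin m)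
    (h : ∀ i, i ≠ i0 → g i = f i) :
    ((List.ofFn g : List ℕ) : Multiset ℕ)
      = g i0 ::ₘ ((List.ofFn f : List ℕ) : Multiset ℕ).erase (f i0) := by
  have hs : ∀ (u : Fin m → ℕ),
      ((List.ofFn u : List ℕ) : Multiset ℕ) = Multiset.map u ↑(List.finRange m) := by
    intro u; rw [List.ofFn_eq_map, Multiset.map_coe]
  have hnd : (↑(List.finRange m) : Multiset (Fin m)).Nodup := by
    rw [Multiset.coe_nodup]; exact List.nodup_finRange m
  have hmem : i0 ∈ (↑(List.finRange m) : Multiset (Fin m)) := by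
    rw [Multiset.mem_coe]; exact List.mem_finRange i0
  set s : Multiset (Fin m) := ↑(List.finRange m)
  have hce : s = i0 ::ₘ s.erase i0 := (Multiset.cons_erase hmem).symm
  have hmt : Multiset.map g (s.erase i0) = Multiset.map f (s.erase i0) := by
    apply Multiset.map_congr rfl
    intro i hi
    exact h i ((hnd.mem_erase_iff.1 hi).1)
  rw [hs g, hs f, hce, Multiset.map_cons, Multiset.map_cons, Multiset.erase_cons_head, hmt]

/-- Decrementing one part `v ≥ 1`: the sorted sequence changes exactly at index
`transpose s (v-1)`, from `v` to `v-1`. -/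
lemma key_dec (s : Multiset ℕ) (v : ℕ) (hv : 1 ≤ v) :
    part (v ::ₘ s) (transpose s (v - 1)) = v ∧
    part ((v - 1) ::ₘ s) (transpose s (v - 1)) = v - 1 ∧
    ∀ i, i ≠ transpose s (v - 1) → part ((v - 1) ::ₘ s) i = part (v ::ₘ s) i := by
  refine ⟨?_, ?_, ?_⟩
  · have h1 : ¬ (v < part (v ::ₘ s) (transpose s (v - 1))) := by
      intro hlt
      have h := (part_lt_iff _ _ _).1 hlt
      rw [transpose_cons, if_neg (lt_irrefl v)] at h
      have := transpose_anti s (show v - 1 ≤ v by omega)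
      omega
    have h2 : v - 1 < part (v ::ₘ s) (transpose s (v - 1)) := by
      apply (part_lt_iff _ _ _).2
      rw [transpose_cons, if_pos (by omega)]
      omega
    omega
  · have h1 : ¬ (v - 1 < part ((v - 1) ::ₘ s) (transpose s (v - 1))) := by
      intro hlt
      have h := (part_lt_iff _ _ _).1 hlt
      rw [transpose_cons, if_neg (lt_irrefl (v - 1))] at h
      omega
    have h2 : v - 1 = 0 ∨ v - 2 < part ((v - 1) ::ₘ s) (transpose s (v - 1)) := by
      rcases Nat.eq_zero_or_pos (v - 1) with h | h
      · exact Or.inl h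
      · right
        apply (part_lt_iff _ _ _).2
        rw [transpose_cons, if_pos (by omega)]
        have := transpose_anti s (show v - 2 ≤ v - 1 by omega)
        omega
    omega
  · intro i hi
    apply part_eq_of_transpose
    intro t
    rw [transpose_cons, transpose_cons]
    by_cases ht : t = v - 1
    · subst ht
      rw [if_neg (lt_irrefl (v - 1)), if_pos (by omega)]
      omega
    · have : (if t < v - 1 then 1 else 0) = (if t < v then 1 else 0) := by
        split_ifs <;> omega
      rw [this]

/-- Incrementing one part `w`: the sorted sequence changes exactly at index
`transpose s w`, from `w` to `w+1`. -/
lemma key_inc (s : Multiset ℕ) (w : ℕ) :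
    part (w ::ₘ s) (transpose s w) = w ∧
    part ((w + 1) ::ₘ s) (transpose s w) = w + 1 ∧
    ∀ j, j ≠ transpose s w → part ((w + 1) ::ₘ s) j = part (w ::ₘ s) j := by
  refine ⟨?_, ?_, ?_⟩
  · have h1 : ¬ (w < part (w ::ₘ s) (transpose s w)) := by
      intro hlt
      have h := (part_lt_iff _ _ _).1 hlt
      rw [transpose_cons, if_neg (lt_irrefl w)] at h
      omega
    have h2 : w = 0 ∨ w - 1 < part (w ::ₘ s) (transpose s w) := by
      rcases Nat.eq_zero_or_pos w with h | h
      · exact Or.inl h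
      · right
        apply (part_lt_iff _ _ _).2
        rw [transpose_cons, if_pos (by omega)]
        have := transpose_anti s (show w - 1 ≤ w by omega)
        omega
    omega
  · have h1 : ¬ (w + 1 < part ((w + 1) ::ₘ s) (transpose s w)) := by
      intro hlt
      have h := (part_lt_iff _ _ _).1 hlt
      rw [transpose_cons, if_neg (lt_irrefl (w + 1))] at h
      have := transpose_anti s (show w ≤ w + 1 by omega)
      omega
    have h2 : w < part ((w + 1) ::ₘ s) (transpose s w) := by
      apply (part_lt_iff _ _ _).2
      rw [transpose_cons, if_pos (by omega)]
      omega
    omega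
  · intro j hj
    apply part_eq_of_transpose
    intro t
    rw [transpose_cons, transpose_cons]
    by_cases ht : t = w
    · rw [ht, if_pos (by omega), if_neg (lt_irrefl w)]
      omega
    · have : (if t < w + 1 then 1 else 0) = (if t < w then 1 else 0) := by
        split_ifs <;> omega
      rw [this]

/-- The odd case: from `θ_k(Λ)` to `θ_{k+1}(Λ)` (represented with first row of `m₂`
entries and second row of `m₁ + 1` entries) a unique first-row entry `α_k` becomes
`α_k − 2` and a unique second-row entry `β_k` becomes `β_k + 2`; the `α_k` share a
parity and strictly decrease, the `β_k` share a parity and strictly increase, and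
`α`'s and `β`'s have opposite parities. -/
theorem statement8 (n n' : ℕ) (δ : ℤ) (hpar : ¬ Even (n + n'))
    (hτ : 0 ≤ tau n n' δ) (Λ : Symbol) (hΛ : InS n δ Λ)
    (hν : 1 ≤ part Λ.Upsilon.2 0) (m1 m2 : ℕ)
    (hm1 : Λ.Upsilon.1.card ≤ m1) (hm2 : Λ.Upsilon.2.card ≤ m2)
    (hdef : (m2 : ℤ) - ((m1 : ℤ) + 1) = deltaPrime n n' δ)
    (T : ℕ → Symbol)
    (hT : T = fun k => symbolOfBip (deltaPrime n n' δ) (thetaBip n n' δ k Λ.Upsilon)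
      m2 (m1 + 1)) :
    ∃ α β : ℕ → ℕ,
      (∀ k, k < part Λ.Upsilon.2 0 →
        α k ∈ (T k).A ∧ β k ∈ (T k).B ∧
        ((T (k + 1)).A : Multiset ℕ) = (α k - 2) ::ₘ (((T k).A : Multiset ℕ).erase (α k)) ∧
        ((T (k + 1)).B : Multiset ℕ) = (β k + 2) ::ₘ (((T k).B : Multiset ℕ).erase (β k))) ∧
      (∀ k, k < part Λ.Upsilon.2 0 → ∀ k', k' < part Λ.Upsilon.2 0 → α k % 2 = α k' % 2) ∧
      (∀ k k', k < k' → k' < part Λ.Upsilon.2 0 → α k' < α k) ∧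
      (∀ k, k < part Λ.Upsilon.2 0 → ∀ k', k' < part Λ.Upsilon.2 0 → β k % 2 = β k' % 2) ∧
      (∀ k k', k < k' → k' < part Λ.Upsilon.2 0 → β k < β k') ∧
      (∀ k, k < part Λ.Upsilon.2 0 → ∀ k', k' < part Λ.Upsilon.2 0 → α k % 2 ≠ β k' % 2) := by
  subst hT
  simp only []
  set ν₁ := part Λ.Upsilon.2 0 with hν₁def
  set τ' := tauNat n n' δ with hτ'def
  set e := eps (deltaPrime n n' δ) with hedef
  have he1 : e ≤ 1 := by rw [hedef]; unfold eps; split <;> omega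
  have hA : ∀ k, (symbolOfBip (deltaPrime n n' δ) (thetaBip n n' δ k Λ.Upsilon) m2 (m1+1)).A
      = List.ofFn (fun i : Fin m2 =>
          2 * (part ((ν₁ - k) ::ₘ mtail Λ.Upsilon.2) (i:ℕ) + (m2 - 1 - (i:ℕ))) + e) := by
    intro k
    unfold symbolOfBip thetaBip
    rw [if_neg hpar]
    simp only [part_strip]
    rfl
  have hB : ∀ k, (symbolOfBip (deltaPrime n n' δ) (thetaBip n n' δ k Λ.Upsilon) m2 (m1+1)).B
      = List.ofFn (fun j : Fin (m1+1) =>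
          2 * (part ((τ' + k) ::ₘ Λ.Upsilon.1) (j:ℕ) + (m1 - (j:ℕ))) + (1 - e)) := by
    intro k
    unfold symbolOfBip thetaBip
    rw [if_neg hpar]
    simp only [part_strip, Nat.add_sub_cancel]
    rfl
  have hmem : ν₁ ∈ Λ.Upsilon.2 := part_zero_mem _ (by omega)
  have hcardν : 1 ≤ Multiset.card Λ.Upsilon.2 :=
    Multiset.card_pos_iff_exists_mem.2 ⟨ν₁, hmem⟩
  have hcard : Multiset.card (mtail Λ.Upsilon.2) = Multiset.card Λ.Upsilon.2 - 1 := by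
    unfold mtail
    rw [← hν₁def, Multiset.card_erase_of_mem hmem]
    rfl
  have hi0lt : ∀ k, transpose (mtail Λ.Upsilon.2) (ν₁ - k - 1) < m2 := by
    intro k
    have h1 := transpose_le_card (mtail Λ.Upsilon.2) (ν₁ - k - 1)
    omega
  have hj0le : ∀ k, transpose Λ.Upsilon.1 (τ' + k) ≤ m1 := by
    intro k
    exact le_trans (transpose_le_card _ _) hm1
  refine ⟨fun k => 2 * ((ν₁ - k) + (m2 - 1 - transpose (mtail Λ.Upsilon.2) (ν₁ - k - 1))) + e,
          fun k => 2 * ((τ' + k) + (m1 - transpose Λ.Upsilon.1 (τ' + k))) + (1 - e),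
          ?_, ?_, ?_, ?_, ?_, ?_⟩
  · intro k hk
    have hk1 : 1 ≤ ν₁ - k := by omega
    obtain ⟨hd1, hd2, hd3⟩ := key_dec (mtail Λ.Upsilon.2) (ν₁ - k) hk1
    obtain ⟨hi1, hi2, hi3⟩ := key_inc Λ.Upsilon.1 (τ' + k)
    have hsub : ν₁ - (k+1) = ν₁ - k - 1 := by omega
    have hsub2 : τ' + (k+1) = (τ' + k) + 1 := by omega
    have e1 : part ((ν₁ - (k+1)) ::ₘ mtail Λ.Upsilon.2)
        (transpose (mtail Λ.Upsilon.2) (ν₁ - k - 1)) = ν₁ - k - 1 := by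
      rw [hsub]; exact hd2
    have e2 : part ((ν₁ - k) ::ₘ mtail Λ.Upsilon.2)
        (transpose (mtail Λ.Upsilon.2) (ν₁ - k - 1)) = ν₁ - k := hd1
    have e3 : part ((τ' + (k+1)) ::ₘ Λ.Upsilon.1) (transpose Λ.Upsilon.1 (τ' + k))
        = (τ' + k) + 1 := by rw [hsub2]; exact hi2
    have e4 : part ((τ' + k) ::ₘ Λ.Upsilon.1) (transpose Λ.Upsilon.1 (τ' + k)) = τ' + k := hi1
    refine ⟨?_, ?_, ?_, ?_⟩
    · rw [hA k, List.mem_ofFn]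
      refine ⟨⟨transpose (mtail Λ.Upsilon.2) (ν₁ - k - 1), hi0lt k⟩, ?_⟩
      show 2 * (part ((ν₁ - k) ::ₘ mtail Λ.Upsilon.2)
          (transpose (mtail Λ.Upsilon.2) (ν₁ - k - 1))
          + (m2 - 1 - transpose (mtail Λ.Upsilon.2) (ν₁ - k - 1))) + e = _
      rw [e2]
    · rw [hB k, List.mem_ofFn]
      refine ⟨⟨transpose Λ.Upsilon.1 (τ' + k), by have := hj0le k; omega⟩, ?_⟩
      show 2 * (part ((τ' + k) ::ₘ Λ.Upsilon.1) (transpose Λ.Upsilon.1 (τ' + k))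
          + (m1 - transpose Λ.Upsilon.1 (τ' + k))) + (1 - e) = _
      rw [e4]
    · rw [hA k, hA (k+1)]
      have hupd := ofFn_update
        (fun i : Fin m2 =>
          2 * (part ((ν₁ - k) ::ₘ mtail Λ.Upsilon.2) (i:ℕ) + (m2 - 1 - (i:ℕ))) + e)
        (fun i : Fin m2 =>
          2 * (part ((ν₁ - (k+1)) ::ₘ mtail Λ.Upsilon.2) (i:ℕ) + (m2 - 1 - (i:ℕ))) + e)
        ⟨transpose (mtail Λ.Upsilon.2) (ν₁ - k - 1), hi0lt k⟩
        (by
          intro i hi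
          have hival : (i:ℕ) ≠ transpose (mtail Λ.Upsilon.2) (ν₁ - k - 1) := by
            intro hval; exact hi (Fin.ext hval)
          rw [hsub, hd3 (i:ℕ) hival])
      rw [hupd]
      simp only [e1, e2]
      congr 1
      omega
    · rw [hB k, hB (k+1)]
      have hupd := ofFn_update
        (fun j : Fin (m1+1) =>
          2 * (part ((τ' + k) ::ₘ Λ.Upsilon.1) (j:ℕ) + (m1 - (j:ℕ))) + (1 - e))
        (fun j : Fin (m1+1) =>
          2 * (part ((τ' + (k+1)) ::ₘ Λ.Upsilon.1) (j:ℕ) + (m1 - (j:ℕ))) + (1 - e))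
        ⟨transpose Λ.Upsilon.1 (τ' + k), by have := hj0le k; omega⟩
        (by
          intro j hj
          have hjval : (j:ℕ) ≠ transpose Λ.Upsilon.1 (τ' + k) := by
            intro hval; exact hj (Fin.ext hval)
          rw [hsub2, hi3 (j:ℕ) hjval])
      rw [hupd]
      simp only [e3, e4]
      congr 1
      omega
  · intro k hk k' hk'
    beta_reduce
    omega
  · intro k k' hkk hk'
    have h1 : transpose (mtail Λ.Upsilon.2) (ν₁ - k - 1)
        ≤ transpose (mtail Λ.Upsilon.2) (ν₁ - k' - 1) := transpose_anti _ (by omega)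
    have h2 : m2 - 1 - transpose (mtail Λ.Upsilon.2) (ν₁ - k' - 1)
        ≤ m2 - 1 - transpose (mtail Λ.Upsilon.2) (ν₁ - k - 1) := Nat.sub_le_sub_left h1 _
    beta_reduce
    omega
  · intro k hk k' hk'
    beta_reduce
    omega
  · intro k k' hkk hk'
    have h1 : transpose Λ.Upsilon.1 (τ' + k')
        ≤ transpose Λ.Upsilon.1 (τ' + k) := transpose_anti _ (by omega)
    have h2 : m1 - transpose Λ.Upsilon.1 (τ' + k)
        ≤ m1 - transpose Λ.Upsilon.1 (τ' + k') := Nat.sub_le_sub_left h1 _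
    beta_reduce
    omega
  · intro k hk k' hk'
    beta_reduce
    omega


end PanUnitary
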